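/- Deterministic core of Lemma D.2 (dis-radius) of 'Active Learning with Logged Data': For all γ0, γ1 > 0 there exists a constant γ2 > 1, depending only on γ0 and γ1, with the following property. Let H be a set, h*, ĥ, h ∈ H, let L, L̂ : H → ℝ, let ρ, ρ̂ : H × H → [0,∞), let σ ≥ 0, and set ν = L(h*), assumed ≥ 0. Assume: (i) L(g) − L(h*) ≤ 2·(L̂(g) − L̂(h*)) + γ1·σ + γ1·sqrt(σ·ν) for g ∈ {h, ĥ}; (ii) L̂(ĥ) ≤ L̂(h*); (iii) L̂(h) ≤ L̂(ĥ) + γ0·σ + γ0·sqrt(σ·ρ̂(h,ĥ)); (iv) ρ̂(h,ĥ) ≤ ρ̂(h,h*) + ρ̂(ĥ,h*); (v) ρ̂(g,h*) ≤ 2·ρ(g,h*) + (16/3)·σ for g ∈ {h, ĥ}; (vi) ρ(g,h*) ≤ (L(g) − L(h*)) + 2·ν for g ∈ {h, ĥ}. Then L(h) − L(h*) ≤ γ2·σ + γ2·sqrt(σ·ν). -/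
import Mathlib

private lemma sqrt_mul_le_half_add {x y : ℝ} (hx : 0 ≤ x) (hy : 0 ≤ y) :
    Real.sqrt (x * y) ≤ (x + y) / 2 := by
  have h1 : x * y ≤ ((x + y) / 2) ^ 2 := by nlinarith [sq_nonneg (x - y)]
  calc Real.sqrt (x * y) ≤ Real.sqrt (((x + y) / 2) ^ 2) := Real.sqrt_le_sqrt h1
    _ = (x + y) / 2 := Real.sqrt_sq (by linarith)

private lemma sqrt_add_le {x y : ℝ} (hx : 0 ≤ x) (hy : 0 ≤ y) :
    Real.sqrt (x + y) ≤ Real.sqrt x + Real.sqrt y := by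
  have hxs := Real.sq_sqrt hx
  have hys := Real.sq_sqrt hy
  have h1 : x + y ≤ (Real.sqrt x + Real.sqrt y) ^ 2 := by
    nlinarith [Real.sqrt_nonneg x, Real.sqrt_nonneg y]
  calc Real.sqrt (x + y) ≤ Real.sqrt ((Real.sqrt x + Real.sqrt y) ^ 2) :=
        Real.sqrt_le_sqrt h1
    _ = Real.sqrt x + Real.sqrt y :=
        Real.sqrt_sq (by positivity)

/-- **Deterministic core of Lemma D.2 (dis-radius) of "Active Learning with
Logged Data"**: for all `γ0, γ1 > 0` there is a constant `γ2 > 1`, depending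
only on `γ0` and `γ1`, such that for any hypothesis set `H`, population error
`L`, empirical error `L̂`, population and empirical disagreement masses
`ρ, ρ̂ ≥ 0`, deviation scale `σ ≥ 0`, minimizers `h*`, `ĥ` and candidate `h`
satisfying hypotheses (i)–(vi), one has
`L(h) − L(h*) ≤ γ2·σ + γ2·sqrt(σ·ν)` where `ν = L(h*) ≥ 0`. -/
theorem dis_radius_core.{u} :
    ∀ γ0 γ1 : ℝ, 0 < γ0 → 0 < γ1 →
    ∃ γ2 : ℝ, 1 < γ2 ∧
      ∀ (H : Type u) (hstar hhat h : H) (L Lhat : H → ℝ)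
        (ρ ρhat : H → H → ℝ) (σ : ℝ),
        (∀ g g' : H, 0 ≤ ρ g g') → (∀ g g' : H, 0 ≤ ρhat g g') →
        0 ≤ σ → 0 ≤ L hstar →
        -- (i) excess-error concentration for g ∈ {h, ĥ}
        (∀ g ∈ ({h, hhat} : Set H),
          L g - L hstar ≤ 2 * (Lhat g - Lhat hstar)
            + γ1 * σ + γ1 * Real.sqrt (σ * L hstar)) →
        -- (ii) ĥ is the empirical risk minimizer
        Lhat hhat ≤ Lhat hstar →
        -- (iii) h lies in the next candidate set
        Lhat h ≤ Lhat hhat + γ0 * σ + γ0 * Real.sqrt (σ * ρhat h hhat) →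
        -- (iv) triangle inequality for the empirical disagreement
        ρhat h hhat ≤ ρhat h hstar + ρhat hhat hstar →
        -- (v) empirical vs true disagreement for g ∈ {h, ĥ}
        (∀ g ∈ ({h, hhat} : Set H),
          ρhat g hstar ≤ 2 * ρ g hstar + (16 / 3) * σ) →
        -- (vi) disagreement vs error rates for g ∈ {h, ĥ}
        (∀ g ∈ ({h, hhat} : Set H),
          ρ g hstar ≤ (L g - L hstar) + 2 * L hstar) →
        L h - L hstar ≤ γ2 * σ + γ2 * Real.sqrt (σ * L hstar) := by
  intro γ0 γ1 hγ0 hγ1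
  refine ⟨2*(γ1 + 2*γ0 + 2*γ0*Real.sqrt (3*γ1 + 32/3) + 4*γ0^2)
      + 2*(γ1 + 2*γ0*Real.sqrt (γ1 + 8)) + 2, ?_, ?_⟩
  · nlinarith [Real.sqrt_nonneg (3*γ1 + 32/3), Real.sqrt_nonneg (γ1 + 8)]
  intro H hstar hhat h L Lhat ρ ρhat σ hρ hρhat hσ hν hi hii hiii hiv hv hvi
  have hA : (0:ℝ) ≤ 3*γ1 + 32/3 := by linarith
  have hB : (0:ℝ) ≤ γ1 + 8 := by linarith
  set cA := Real.sqrt (3*γ1 + 32/3) with hcA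
  set cB := Real.sqrt (γ1 + 8) with hcB
  have hcA0 : 0 ≤ cA := Real.sqrt_nonneg _
  have hcB0 : 0 ≤ cB := Real.sqrt_nonneg _
  set ν := L hstar with hνdef
  set s := Real.sqrt (σ * ν) with hs
  have hs0 : 0 ≤ s := Real.sqrt_nonneg _
  set a := L h - L hstar with ha
  set b := L hhat - L hstar with hb
  rcases le_or_gt a 0 with hcase | hcase
  · have h1 : (0:ℝ) ≤ (2*(γ1 + 2*γ0 + 2*γ0*cA + 4*γ0^2) + 2*(γ1 + 2*γ0*cB) + 2) * σ := by
      positivity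
    have h2 : (0:ℝ) ≤ (2*(γ1 + 2*γ0 + 2*γ0*cA + 4*γ0^2) + 2*(γ1 + 2*γ0*cB) + 2) * s := by
      positivity
    linarith
  -- main case : a > 0
  have hmemh : h ∈ ({h, hhat} : Set H) := Or.inl rfl
  have hmemhh : hhat ∈ ({h, hhat} : Set H) := Or.inr rfl
  -- step 1 : b ≤ γ1 σ + γ1 s
  have hb1 : b ≤ γ1 * σ + γ1 * s := by
    have := hi hhat hmemhh
    have := hii
    linarith
  -- step 3 : ρhat h hhat bound
  have hρb : ρhat h hhat ≤ 2*a + 2*b + 8*ν + (32/3)*σ := by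
    have v1 := hv h hmemh
    have v2 := hv hhat hmemhh
    have w1 := hvi h hmemh
    have w2 := hvi hhat hmemhh
    have := hiv
    linarith
  -- AM-GM : s ≤ (σ+ν)/2
  have hsAM : s ≤ (σ + ν)/2 := sqrt_mul_le_half_add hσ hν
  -- combined bound on σ * ρhat h hhat
  have hσρ : σ * ρhat h hhat ≤ 2*σ*a + (3*γ1 + 32/3)*σ^2 + (γ1 + 8)*(σ*ν) := by
    have h1 : σ * ρhat h hhat ≤ σ * (2*a + 2*(γ1*σ + γ1*s) + 8*ν + (32/3)*σ) := by
      apply mul_le_mul_of_nonneg_left _ hσ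
      linarith
    have h2 : σ * (2*γ1*s) ≤ σ * (γ1*(σ+ν)) := by
      apply mul_le_mul_of_nonneg_left _ hσ
      nlinarith
    nlinarith
  -- split the square root
  have h2σa : (0:ℝ) ≤ 2*σ*a := by positivity
  have hAσ : (0:ℝ) ≤ (3*γ1 + 32/3)*σ^2 := by positivity
  have hBσν : (0:ℝ) ≤ (γ1 + 8)*(σ*ν) := by positivity
  have hsplit : Real.sqrt (σ * ρhat h hhat)
      ≤ Real.sqrt (2*σ*a) + cA * σ + cB * s := by
    have h1 : Real.sqrt (σ * ρhat h hhat)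
        ≤ Real.sqrt (2*σ*a + ((3*γ1 + 32/3)*σ^2 + (γ1 + 8)*(σ*ν))) :=
      Real.sqrt_le_sqrt (by linarith)
    have h2 : Real.sqrt (2*σ*a + ((3*γ1 + 32/3)*σ^2 + (γ1 + 8)*(σ*ν)))
        ≤ Real.sqrt (2*σ*a) + Real.sqrt ((3*γ1 + 32/3)*σ^2 + (γ1 + 8)*(σ*ν)) :=
      sqrt_add_le h2σa (by linarith)
    have h3 : Real.sqrt ((3*γ1 + 32/3)*σ^2 + (γ1 + 8)*(σ*ν))
        ≤ Real.sqrt ((3*γ1 + 32/3)*σ^2) + Real.sqrt ((γ1 + 8)*(σ*ν)) :=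
      sqrt_add_le hAσ hBσν
    have h4 : Real.sqrt ((3*γ1 + 32/3)*σ^2) = cA * σ := by
      rw [hcA, Real.sqrt_mul hA (σ^2), Real.sqrt_sq hσ]
    have h5 : Real.sqrt ((γ1 + 8)*(σ*ν)) = cB * s := by
      rw [hcB, hs, Real.sqrt_mul hB (σ*ν)]
    linarith
  -- AM-GM on the 2σa term
  have hAMGM : 2*γ0 * Real.sqrt (2*σ*a) ≤ 4*γ0^2*σ + a/2 := by
    have e1 : 2*γ0 * Real.sqrt (2*σ*a) = Real.sqrt ((8*γ0^2*σ) * a) := by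
      rw [show (8*γ0^2*σ) * a = (2*γ0)^2 * (2*σ*a) by ring,
        Real.sqrt_mul (by positivity) (2*σ*a), Real.sqrt_sq (by positivity)]
    have e2 : Real.sqrt ((8*γ0^2*σ) * a) ≤ (8*γ0^2*σ + a)/2 :=
      sqrt_mul_le_half_add (by positivity) (le_of_lt hcase)
    linarith
  -- combine everything
  have hih := hi h hmemh
  have hmul : γ0 * Real.sqrt (σ * ρhat h hhat)
      ≤ γ0 * (Real.sqrt (2*σ*a) + cA * σ + cB * s) :=
    mul_le_mul_of_nonneg_left hsplit (le_of_lt hγ0)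
  have hfinal : a ≤ 2*(γ1 + 2*γ0 + 2*γ0*cA + 4*γ0^2)*σ + 2*(γ1 + 2*γ0*cB)*s := by
    linarith [hih, hiii, hii, hmul, hAMGM]
  have h6 : (0:ℝ) ≤ (2*(γ1 + 2*γ0*cB) + 2) * σ := by positivity
  have h7 : (0:ℝ) ≤ (2*(γ1 + 2*γ0 + 2*γ0*cA + 4*γ0^2) + 2) * s := by positivity
  linarith [hfinal, h6, h7]
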